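/- arXiv:2311.07629 — 2 statements merged into one kernel-verified Lean document; each statement's English description precedes it below -/
import Mathlib

section
/- Let G be a d-regular simple graph on n vertices whose adjacency-matrix eigenvalues λ₁ ≥ λ₂ ≥ ⋯ ≥ λₙ satisfy 0 ≤ λ₂ ≤ √(d/2). Then λ₂ · ((d − λ₂)² + 2·n·λ₂) ≥ d·(n − 2d). -/
open Finset Matrix

open Finset Matrix

private lemma trace_pow_eq_sum_eigenvalues {m : Type*} [Fintype m] [DecidableEq m]
    {A : Matrix m m ℝ} (hA : A.IsHermitian) (k : ℕ) :
    (A ^ k).trace = ∑ i, hA.eigenvalues i ^ k := by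
  set U : Matrix m m ℝ := (hA.eigenvectorUnitary : Matrix m m ℝ) with hUdef
  have hU1 : U * star U = 1 := Matrix.mem_unitaryGroup_iff.mp (hA.eigenvectorUnitary).2
  have hU2 : star U * U = 1 := Matrix.mem_unitaryGroup_iff'.mp (hA.eigenvectorUnitary).2
  set Dg : Matrix m m ℝ := Matrix.diagonal (RCLike.ofReal ∘ hA.eigenvalues) with hDgdef
  have key : A ^ k = U * Dg ^ k * star U := by
    induction k with
    | zero => simpa using hU1.symm
    | succ k ih =>
      rw [pow_succ, ih]
      conv_lhs => rw [hA.spectral_theorem]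
      simp only [Unitary.conjStarAlgAut_apply, Unitary.coe_star, Matrix.mul_assoc, ← hUdef, ← hDgdef]
      rw [show star U * (U * (Dg * star U)) = Dg * star U by
        rw [← Matrix.mul_assoc, hU2, Matrix.one_mul], pow_succ]
      simp [Matrix.mul_assoc]
  rw [key, Matrix.trace_mul_cycle, hU2, Matrix.one_mul, hDgdef, Matrix.diagonal_pow,
    Matrix.trace_diagonal]
  simp [RCLike.ofReal_real_eq_id]


private lemma eigenvalue_le_degree {n d : ℕ} (G : SimpleGraph (Fin n)) [DecidableRel G.Adj]
    (hreg : G.IsRegularOfDegree d) (hA : (G.adjMatrix ℝ).IsHermitian) (j : Fin n) :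
    hA.eigenvalues j ≤ (d : ℝ) := by
  set A : Matrix (Fin n) (Fin n) ℝ := G.adjMatrix ℝ with hAdef
  set w : Fin n → ℝ := ⇑(hA.eigenvectorBasis j) with hwdef
  have hAv : A *ᵥ w = hA.eigenvalues j • w := hA.mulVec_eigenvectorBasis j
  have hnorm : ∑ u, w u * w u = 1 := by
    have horth := hA.eigenvectorBasis.orthonormal
    rw [orthonormal_iff_ite] at horth
    have h2 : (inner ℝ (hA.eigenvectorBasis j) (hA.eigenvectorBasis j) : ℝ) = 1 := by
      simpa using horth j j
    rw [← h2]
    simp only [hwdef, PiLp.inner_apply, RCLike.inner_apply, conj_trivial]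
  have hrow : ∀ u : Fin n, ∑ t, A u t = (d : ℝ) := by
    intro u
    have h5 : (Finset.univ.filter (fun t => G.Adj u t)).card = d := by
      rw [← SimpleGraph.neighborFinset_eq_filter]; exact hreg u
    calc ∑ t, A u t = ((Finset.univ.filter (fun t => G.Adj u t)).card : ℝ) := by
          simp [hAdef, SimpleGraph.adjMatrix_apply, Finset.sum_boole]
    _ = (d : ℝ) := by rw [h5]
  have hsym : ∀ u t : Fin n, A u t = A t u := by
    intro u t
    simp only [hAdef, SimpleGraph.adjMatrix_apply]
    simp [SimpleGraph.adj_comm]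
  have hcol : ∀ t : Fin n, ∑ u, A u t = (d : ℝ) := by
    intro t
    rw [show ∑ u, A u t = ∑ u, A t u from Finset.sum_congr rfl fun u _ => hsym u t]
    exact hrow t
  have hnn : ∀ u t : Fin n, 0 ≤ A u t := by
    intro u t
    by_cases h : G.Adj u t <;> simp [hAdef, h]
  have key : hA.eigenvalues j = ∑ u, ∑ t, A u t * (w t * w u) := by
    calc hA.eigenvalues j = hA.eigenvalues j * ∑ u, w u * w u := by rw [hnorm]; ring
    _ = ∑ u, (hA.eigenvalues j • w) u * w u := by
        rw [Finset.mul_sum]; exact Finset.sum_congr rfl fun u _ => by simp; ring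
    _ = ∑ u, (A *ᵥ w) u * w u := by rw [hAv]
    _ = ∑ u, ∑ t, A u t * (w t * w u) := by
        refine Finset.sum_congr rfl fun u _ => ?_
        rw [show (A *ᵥ w) u = ∑ t, A u t * w t from rfl, Finset.sum_mul]
        exact Finset.sum_congr rfl fun t _ => by ring
  have bound : ∑ u, ∑ t, A u t * (w t * w u)
      ≤ ∑ u, ∑ t, A u t * ((w t ^ 2 + w u ^ 2) / 2) := by
    refine Finset.sum_le_sum fun u _ => Finset.sum_le_sum fun t _ => ?_
    have h4 : w t * w u ≤ (w t ^ 2 + w u ^ 2) / 2 := by nlinarith [sq_nonneg (w t - w u)]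
    exact mul_le_mul_of_nonneg_left h4 (hnn u t)
  have eval : ∑ u, ∑ t, A u t * ((w t ^ 2 + w u ^ 2) / 2) = (d : ℝ) := by
    have e1 : ∀ u, ∑ t, A u t * ((w t ^ 2 + w u ^ 2) / 2)
        = (∑ t, A u t * w t ^ 2) / 2 + (d : ℝ) * w u ^ 2 / 2 := by
      intro u
      rw [show ((d : ℝ) * w u ^ 2 / 2) = (∑ t, A u t) * w u ^ 2 / 2 from by rw [hrow]]
      rw [Finset.sum_div, Finset.sum_mul, Finset.sum_div, ← Finset.sum_add_distrib]
      exact Finset.sum_congr rfl fun t _ => by ring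
    rw [Finset.sum_congr rfl fun u _ => e1 u, Finset.sum_add_distrib]
    have e2 : ∑ u, (∑ t, A u t * w t ^ 2) / 2 = (d : ℝ) / 2 := by
      rw [← Finset.sum_div, Finset.sum_comm]
      have : ∀ t : Fin n, ∑ u, A u t * w t ^ 2 = (d : ℝ) * w t ^ 2 := by
        intro t; rw [← Finset.sum_mul, hcol]
      rw [Finset.sum_congr rfl fun t _ => this t, ← Finset.mul_sum]
      have : ∑ t, w t ^ 2 = 1 := by
        rw [← hnorm]; exact Finset.sum_congr rfl fun t _ => by ring
      rw [this, mul_one]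
    have e3 : ∑ u, (d : ℝ) * w u ^ 2 / 2 = (d : ℝ) / 2 := by
      rw [← Finset.sum_div, ← Finset.mul_sum]
      have : ∑ t, w t ^ 2 = 1 := by
        rw [← hnorm]; exact Finset.sum_congr rfl fun t _ => by ring
      rw [this, mul_one]
    rw [e2, e3]; ring
  rw [key]
  calc ∑ u, ∑ t, A u t * (w t * w u) ≤ _ := bound
  _ = (d : ℝ) := eval

set_option maxHeartbeats 1000000 in
/-- Let `G` be a `d`-regular simple graph on `n ≥ 2` vertices whose
adjacency-matrix eigenvalues, listed in decreasing order as `μ`, satisfy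
`0 ≤ λ₂ ≤ √(d/2)` where `λ₂ = μ 1`. Then
`λ₂ · ((d − λ₂)² + 2·n·λ₂) ≥ d·(n − 2d)`. -/
theorem stmt_9 (n d : ℕ) (hn : 2 ≤ n)
    (G : SimpleGraph (Fin n)) [DecidableRel G.Adj]
    (hreg : G.IsRegularOfDegree d)
    (hA : (G.adjMatrix ℝ).IsHermitian)
    (μ : Fin n → ℝ) (hμ : Antitone μ)
    (hperm : ∃ σ : Equiv.Perm (Fin n), μ = hA.eigenvalues ∘ σ)
    (hmu2_nonneg : 0 ≤ μ ⟨1, by omega⟩)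
    (hmu2_le : μ ⟨1, by omega⟩ ≤ Real.sqrt ((d : ℝ) / 2)) :
    μ ⟨1, by omega⟩ * (((d : ℝ) - μ ⟨1, by omega⟩) ^ 2 + 2 * n * μ ⟨1, by omega⟩)
      ≥ (d : ℝ) * ((n : ℝ) - 2 * d) := by
  obtain ⟨σ, hσ⟩ := hperm
  have h1n : 1 < n := by omega
  have h0n : 0 < n := by omega
  set i0 : Fin n := ⟨0, h0n⟩ with hi0def
  set i1 : Fin n := ⟨1, h1n⟩ with hi1def
  set D : ℝ := (d : ℝ) with hDdef
  set L : ℝ := μ i1 with hLdef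
  have hL0 : 0 ≤ L := hmu2_nonneg
  have hLle : L ≤ Real.sqrt (D / 2) := hmu2_le
  have hD0 : (0:ℝ) ≤ D := by positivity
  have hL2 : 2 * L ^ 2 ≤ D := by
    have hs := Real.sq_sqrt (show (0:ℝ) ≤ D / 2 by positivity)
    nlinarith [hs, hLle, hL0, Real.sqrt_nonneg (D / 2)]
  suffices hgoal : L * ((D - L) ^ 2 + 2 * n * L) ≥ D * ((n : ℝ) - 2 * D) from hgoal
  rcases Nat.eq_zero_or_pos d with hd0 | hdpos
  · have hDz : D = 0 := by simp [hDdef, hd0]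
    have hLz : L = 0 := le_antisymm (by simpa [hDz] using hLle) hL0
    rw [hLz, hDz]; norm_num
  have hD1 : (1:ℝ) ≤ D := by rw [hDdef]; exact_mod_cast Nat.one_le_iff_ne_zero.mpr (by omega)
  -- eigenvalue facts
  have hub : ∀ i : Fin n, μ i ≤ D := by
    intro i; rw [hσ]; exact eigenvalue_le_degree G hreg hA (σ i)
  have hS1 : ∑ i, μ i = 0 := by
    rw [hσ]
    calc ∑ i, (hA.eigenvalues ∘ σ) i = ∑ j, hA.eigenvalues j :=
          Equiv.sum_comp σ hA.eigenvalues
    _ = ∑ j, hA.eigenvalues j ^ 1 := by simp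
    _ = ((G.adjMatrix ℝ) ^ 1).trace := (trace_pow_eq_sum_eigenvalues hA 1).symm
    _ = 0 := by rw [pow_one]; simp
  have hS2 : ∑ i, (μ i) ^ 2 = (n : ℝ) * D := by
    rw [hσ]
    calc ∑ i, ((hA.eigenvalues ∘ σ) i) ^ 2 = ∑ j, hA.eigenvalues j ^ 2 :=
          Equiv.sum_comp σ (fun j => hA.eigenvalues j ^ 2)
    _ = ((G.adjMatrix ℝ) ^ 2).trace := (trace_pow_eq_sum_eigenvalues hA 2).symm
    _ = ∑ i, ((G.adjMatrix ℝ) * (G.adjMatrix ℝ)) i i := by rw [pow_two]; rfl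
    _ = ∑ _i : Fin n, D := by
          refine Finset.sum_congr rfl fun i _ => ?_
          rw [SimpleGraph.adjMatrix_mul_self_apply_self]
          rw [hreg i]
    _ = (n : ℝ) * D := by rw [Finset.sum_const, Finset.card_univ, Fintype.card_fin,
          nsmul_eq_mul]
  have hnnA : ∀ u t : Fin n, 0 ≤ (G.adjMatrix ℝ) u t := by
    intro u t; by_cases h : G.Adj u t <;> simp [h]
  have hS3 : 0 ≤ ∑ i, (μ i) ^ 3 := by
    rw [hσ]
    have e : ∑ i, ((hA.eigenvalues ∘ σ) i) ^ 3 = ((G.adjMatrix ℝ) ^ 3).trace :=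
      calc ∑ i, ((hA.eigenvalues ∘ σ) i) ^ 3 = ∑ j, hA.eigenvalues j ^ 3 :=
            Equiv.sum_comp σ (fun j => hA.eigenvalues j ^ 3)
      _ = ((G.adjMatrix ℝ) ^ 3).trace := (trace_pow_eq_sum_eigenvalues hA 3).symm
    rw [e, show ((G.adjMatrix ℝ) ^ 3) = (G.adjMatrix ℝ) * (G.adjMatrix ℝ) * (G.adjMatrix ℝ) by
      rw [pow_succ, pow_two]]
    rw [show ((G.adjMatrix ℝ) * (G.adjMatrix ℝ) * (G.adjMatrix ℝ)).trace
        = ∑ i, ((G.adjMatrix ℝ) * (G.adjMatrix ℝ) * (G.adjMatrix ℝ)) i i from rfl]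
    refine Finset.sum_nonneg fun i _ => ?_
    rw [Matrix.mul_apply]
    refine Finset.sum_nonneg fun j _ => mul_nonneg ?_ (hnnA j i)
    rw [Matrix.mul_apply]
    exact Finset.sum_nonneg fun k _ => mul_nonneg (hnnA i k) (hnnA k j)
  have hmono : ∀ i : Fin n, i ≠ i0 → μ i ≤ L := by
    intro i hi
    refine hμ ?_
    rw [Fin.le_def]
    have hv : i.val ≠ 0 := fun h => hi (Fin.ext (by simpa [hi0def] using h))
    simpa [hi1def] using Nat.one_le_iff_ne_zero.mpr hv
  have hLD : L ≤ D := le_trans (hμ (show i0 ≤ i1 by simp [Fin.le_def, hi0def, hi1def])) (hub i0)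
  have hLmu0 : L ≤ μ i0 := hμ (show i0 ≤ i1 by simp [Fin.le_def, hi0def, hi1def])
  -- sum of cubic polynomial R
  have hsumR : ∑ i, ((μ i - L) * ((1+L) * μ i + D) ^ 2)
      = (1+L)^2 * (∑ i, (μ i)^3) + (2*D*(1+L) - L*(1+L)^2) * (∑ i, (μ i)^2)
        + (D^2 - 2*D*L*(1+L)) * (∑ i, μ i) - (n : ℝ) * (L * D^2) := by
    rw [show ∑ i, ((μ i - L) * ((1+L) * μ i + D) ^ 2)
        = ∑ i, ((1+L)^2 * (μ i)^3 + (2*D*(1+L) - L*(1+L)^2) * (μ i)^2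
          + (D^2 - 2*D*L*(1+L)) * (μ i) - L * D^2) from
      Finset.sum_congr rfl fun i _ => by ring]
    rw [Finset.sum_sub_distrib, Finset.sum_add_distrib, Finset.sum_add_distrib,
      ← Finset.mul_sum, ← Finset.mul_sum, ← Finset.mul_sum, Finset.sum_const,
      Finset.card_univ, Fintype.card_fin, nsmul_eq_mul]
  have hupper : ∑ i, ((μ i - L) * ((1+L) * μ i + D) ^ 2) ≤ (D - L) * ((1+L) * D + D) ^ 2 := by
    have hsplit : ∑ i, ((μ i - L) * ((1+L) * μ i + D) ^ 2)
        = (μ i0 - L) * ((1+L) * μ i0 + D) ^ 2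
          + ∑ i ∈ Finset.univ.erase i0, ((μ i - L) * ((1+L) * μ i + D) ^ 2) :=
      (Finset.add_sum_erase Finset.univ
        (fun i => (μ i - L) * ((1+L) * μ i + D) ^ 2) (Finset.mem_univ i0)).symm
    rw [hsplit]
    have hneg : ∑ i ∈ Finset.univ.erase i0, ((μ i - L) * ((1+L) * μ i + D) ^ 2) ≤ 0 := by
      refine Finset.sum_nonpos fun i hi => ?_
      exact mul_nonpos_of_nonpos_of_nonneg
        (sub_nonpos.2 (hmono i (Finset.mem_erase.1 hi).1)) (sq_nonneg _)
    have hR0 : (μ i0 - L) * ((1+L) * μ i0 + D) ^ 2 ≤ (D - L) * ((1+L) * D + D) ^ 2 := by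
      have e1 : 0 ≤ (1+L) * μ i0 + D := by nlinarith [hLmu0, hL0, hD0]
      have e2 : (1+L) * μ i0 + D ≤ (1+L) * D + D := by nlinarith [hub i0, hL0]
      have e5 : ((1+L) * μ i0 + D) ^ 2 ≤ ((1+L) * D + D) ^ 2 := by nlinarith [e1, e2]
      have e3 : μ i0 - L ≤ D - L := by linarith [hub i0]
      have e4 : 0 ≤ μ i0 - L := by linarith [hLmu0]
      exact mul_le_mul e3 e5 (sq_nonneg _) (by linarith [hLD])
    linarith [hneg, hR0]
  -- main chain
  rw [hS1, hS2] at hsumR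
  have e6 : (n:ℝ) * (D * (2*D + D*L - L*(1+L)^2)) ≤ (D - L) * D^2 * (2+L)^2 := by
    nlinarith [hsumR, hupper, mul_nonneg (sq_nonneg (1+L)) hS3]
  have hcube : (0:ℝ) < 1 - L + L^3 := by
    nlinarith [mul_nonneg hL0 (sq_nonneg (L - 1)), sq_nonneg (2*L - 1)]
  have H3 : (0:ℝ) < 2*D + D*L - L*(1+L)^2 := by
    nlinarith [mul_nonneg (show (0:ℝ) ≤ D - 2*L^2 by linarith)
      (show (0:ℝ) ≤ 1 + L by linarith), hD1, hcube]
  have h4L : 4 * L^4 ≤ D^2 := by nlinarith [hL2, hL0, sq_nonneg L]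
  have hG : (0:ℝ) ≤ 2*D^2 + 3*D^2*L + 3*D^2*L^2 + D^2*L^3 - 4*D*L^2 - 3*D*L^3
      - L^3 - 2*L^4 - L^5 := by
    nlinarith [mul_nonneg (mul_nonneg hD0 (mul_nonneg hL0 hL0)) (sub_nonneg.2 hLD),
      mul_nonneg (mul_nonneg (mul_nonneg hL0 hL0) hL0)
        (show (0:ℝ) ≤ D^2 - 1 by nlinarith [hD1]),
      sq_nonneg (D - 2*L^2),
      mul_nonneg hL0 (sub_nonneg.2 h4L),
      mul_nonneg (mul_nonneg hL0 hL0) (sub_nonneg.2 h4L),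
      mul_nonneg (mul_nonneg (mul_nonneg hL0 hL0) (mul_nonneg hL0 hL0)) hL0,
      mul_nonneg (mul_nonneg hL0 hL0) (mul_nonneg hL0 hL0), hD1, hL0, hL2]
  have H2 : (D - 2*L^2) * (D * ((D - L) * (2+L)^2))
      ≤ (2*D^2 + L*(D - L)^2) * (2*D + D*L - L*(1+L)^2) := by
    nlinarith [mul_nonneg hL0 hG]
  have hDpos : (0:ℝ) < D := by linarith
  have hX : (0:ℝ) < D * (2*D + D*L - L*(1+L)^2) := mul_pos hDpos H3
  have hDm2 : (0:ℝ) ≤ D - 2*L^2 := by linarith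
  have e8 : ((n:ℝ) * (D - 2*L^2)) * (D * (2*D + D*L - L*(1+L)^2))
      ≤ (2*D^2 + L*(D - L)^2) * (D * (2*D + D*L - L*(1+L)^2)) := by
    nlinarith [mul_le_mul_of_nonneg_right e6 hDm2,
      mul_le_mul_of_nonneg_left H2 hD0]
  have hfin : (n:ℝ) * (D - 2*L^2) ≤ 2*D^2 + L*(D - L)^2 :=
    le_of_mul_le_mul_right e8 hX
  nlinarith [hfin]
end

section
/- Let G be a d-regular simple graph on n vertices with 1 ≤ d ≤ n/2, and suppose the adjacency-matrix eigenvalues λ₁ ≥ λ₂ ≥ ⋯ ≥ λₙ satisfy 0 ≤ λ₂ ≤ √d / 2. Then (1 + λ₂) · |λₙ| ≥ d/4. -/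
open Matrix Finset

lemma trace_eq_sum_eig {m : ℕ} {A : Matrix (Fin m) (Fin m) ℝ} (hA : A.IsHermitian) :
    A.trace = ∑ i, hA.eigenvalues i := by
  conv_lhs => rw [hA.spectral_theorem, Unitary.conjStarAlgAut_apply]
  rw [Matrix.trace_mul_cycle, Unitary.coe_star_mul_self, Matrix.one_mul, Matrix.trace_diagonal]
  simp

lemma trace_sq_eq_sum_eig_sq {m : ℕ} {A : Matrix (Fin m) (Fin m) ℝ} (hA : A.IsHermitian) :
    (A * A).trace = ∑ i, hA.eigenvalues i ^ 2 := by
  set U : Matrix (Fin m) (Fin m) ℝ := (hA.eigenvectorUnitary : Matrix (Fin m) (Fin m) ℝ)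
  set D : Matrix (Fin m) (Fin m) ℝ := diagonal (RCLike.ofReal ∘ hA.eigenvalues)
  have h : A * A = U * (D * D) * star U := by
    conv_lhs => rw [hA.spectral_theorem, Unitary.conjStarAlgAut_apply]
    have : (U * D * star U) * (U * D * star U) = U * (D * (star U * U) * D) * star U := by
      simp only [Matrix.mul_assoc]
    rw [this, Unitary.coe_star_mul_self]
    simp [Matrix.mul_assoc]
  rw [h, Matrix.trace_mul_cycle, Unitary.coe_star_mul_self, Matrix.one_mul]
  simp [D, diagonal_mul_diagonal, trace_diagonal, sq]

lemma eig_abs_le {m d : ℕ} (G : SimpleGraph (Fin m)) [DecidableRel G.Adj]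
    (hreg : G.IsRegularOfDegree d) (hA : (G.adjMatrix ℝ).IsHermitian) (i : Fin m) :
    |hA.eigenvalues i| ≤ d := by
  have hv := hA.mulVec_eigenvectorBasis i
  set v : Fin m → ℝ := ⇑(hA.eigenvectorBasis i) with hvdef
  have hnorm : ‖hA.eigenvectorBasis i‖ = 1 := hA.eigenvectorBasis.orthonormal.1 i
  have hv0 : ∃ j, v j ≠ 0 := by
    by_contra h
    push_neg at h
    have hz : hA.eigenvectorBasis i = 0 := by
      ext j; exact h j
    rw [hz] at hnorm; simp at hnorm
  obtain ⟨k, -, hk⟩ := Finset.exists_max_image Finset.univ (fun j => |v j|)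
    ⟨i, Finset.mem_univ i⟩
  obtain ⟨j, hj⟩ := hv0
  have hvk : 0 < |v k| := lt_of_lt_of_le (abs_pos.mpr hj) (hk j (Finset.mem_univ j))
  have hmain : |hA.eigenvalues i| * |v k| ≤ (d : ℝ) * |v k| := by
    have h1 : (G.adjMatrix ℝ *ᵥ v) k = hA.eigenvalues i * v k := by
      rw [hv]; rfl
    have h2 : (G.adjMatrix ℝ *ᵥ v) k = ∑ u ∈ G.neighborFinset k, v u := by
      simp
    calc |hA.eigenvalues i| * |v k| = |(G.adjMatrix ℝ *ᵥ v) k| := by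
            rw [h1, abs_mul]
      _ = |∑ u ∈ G.neighborFinset k, v u| := by rw [h2]
      _ ≤ ∑ u ∈ G.neighborFinset k, |v u| := Finset.abs_sum_le_sum_abs _ _
      _ ≤ ∑ _u ∈ G.neighborFinset k, |v k| :=
            Finset.sum_le_sum (fun u _ => hk u (Finset.mem_univ u))
      _ = (d : ℝ) * |v k| := by
            rw [Finset.sum_const, G.card_neighborFinset_eq_degree, hreg k, nsmul_eq_mul]
  exact le_of_mul_le_mul_right hmain hvk

set_option maxHeartbeats 1000000 in
lemma stmt_10_aux (n d : ℕ) (hn : 2 ≤ n) (μ : Fin n → ℝ) (hμ : Antitone μ)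
    (hsum : ∑ i, μ i = 0) (hsq : ∑ i, μ i ^ 2 = (n : ℝ) * d)
    (habs : ∀ i, |μ i| ≤ (d : ℝ))
    (hd1 : 1 ≤ d) (hd2 : (d : ℝ) ≤ (n : ℝ) / 2)
    (h0 : 0 < n) (h1 : 1 < n) (hNlt : n - 1 < n)
    (hmu2_nonneg : 0 ≤ μ ⟨1, h1⟩)
    (hmu2_le : μ ⟨1, h1⟩ ≤ Real.sqrt d / 2) :
    (1 + μ ⟨1, h1⟩) * |μ ⟨n - 1, hNlt⟩| ≥ (d : ℝ) / 4 := by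
  have hn0 : (0:ℝ) < n := by positivity
  have hd0 : (0:ℝ) ≤ d := by positivity
  have hn1 : (1:ℝ) ≤ n := by exact_mod_cast (by omega : 1 ≤ n)
  set i0 : Fin n := ⟨0, h0⟩ with hi0def
  set i1 : Fin n := ⟨1, h1⟩ with hi1def
  set iN : Fin n := ⟨n - 1, hNlt⟩ with hiNdef
  set a : ℝ := μ i1 with hadef
  set b : ℝ := |μ iN| with hbdef
  set m : ℝ := μ i0 with hmdef
  have ha0 : 0 ≤ a := hmu2_nonneg
  have ham : a ≤ m := hμ (by rw [hi0def, hi1def, Fin.mk_le_mk]; omega)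
  have hm0 : 0 ≤ m := le_trans ha0 ham
  have hmd : m ≤ (d : ℝ) := (abs_le.mp (habs i0)).2
  have hb0 : 0 ≤ b := abs_nonneg _
  have ha2 : a ^ 2 ≤ (d : ℝ) / 4 := by
    nlinarith [Real.sq_sqrt hd0, Real.sqrt_nonneg (d:ℝ), hmu2_le, ha0]
  set s : Finset (Fin n) := Finset.univ.erase i0 with hsdef
  have hcards : s.card = n - 1 := by
    rw [hsdef, Finset.card_erase_of_mem (Finset.mem_univ i0), Finset.card_univ, Fintype.card_fin]
  have hmem_le : ∀ i ∈ s, μ i ≤ a := by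
    intro i hi
    have hne : i ≠ i0 := Finset.ne_of_mem_erase hi
    have hval : i.val ≠ 0 := by
      intro h0'
      exact hne (Fin.val_injective (by rw [h0', hi0def]))
    refine hμ ?_
    rw [hi1def, Fin.le_def]
    simp only [Fin.val_mk]
    omega
  have hmem_ge : ∀ i : Fin n, μ iN ≤ μ i := by
    intro i
    refine hμ ?_
    rw [hiNdef, Fin.le_def]
    simp only [Fin.val_mk]
    have := i.isLt
    omega
  set sp : Finset (Fin n) := s.filter (fun i => 0 ≤ μ i) with hspdef
  set sn : Finset (Fin n) := s.filter (fun i => ¬ 0 ≤ μ i) with hsndef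
  set P : ℝ := ∑ i ∈ sp, μ i with hPdef
  set N : ℝ := ∑ i ∈ sn, -μ i with hNdef
  have hP0 : 0 ≤ P :=
    Finset.sum_nonneg (fun i hi => (Finset.mem_filter.mp hi).2)
  have hsplit : m ^ 2 + ∑ i ∈ s, μ i ^ 2 = (n : ℝ) * d := by
    have h := Finset.add_sum_erase Finset.univ (fun i => μ i ^ 2) (Finset.mem_univ i0)
    rw [hsq] at h
    exact h
  have hserase : ∑ i ∈ s, μ i = -m := by
    have h := Finset.add_sum_erase Finset.univ μ (Finset.mem_univ i0)
    rw [hsum] at h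
    linarith
  have hNPm : N = P + m := by
    have hps : P + ∑ i ∈ sn, μ i = ∑ i ∈ s, μ i :=
      Finset.sum_filter_add_sum_filter_not s (fun i => 0 ≤ μ i) μ
    have hneg : N = -∑ i ∈ sn, μ i := by
      rw [hNdef, Finset.sum_neg_distrib]
    rw [hserase] at hps
    rw [hneg]
    linarith
  have hstep : ∑ i ∈ s, μ i ^ 2 ≤ a * P + b * N := by
    have hsplit2 : ∑ i ∈ sp, μ i ^ 2 + ∑ i ∈ sn, μ i ^ 2 = ∑ i ∈ s, μ i ^ 2 :=
      Finset.sum_filter_add_sum_filter_not s (fun i => 0 ≤ μ i) (fun i => μ i ^ 2)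
    have hle1 : ∑ i ∈ sp, μ i ^ 2 ≤ a * P := by
      rw [hPdef, Finset.mul_sum]
      refine Finset.sum_le_sum (fun i hi => ?_)
      have h0' : 0 ≤ μ i := (Finset.mem_filter.mp hi).2
      have hle : μ i ≤ a := hmem_le i (Finset.mem_of_mem_filter i hi)
      nlinarith
    have hle2 : ∑ i ∈ sn, μ i ^ 2 ≤ b * N := by
      rw [hNdef, Finset.mul_sum]
      refine Finset.sum_le_sum (fun i hi => ?_)
      have h0' : μ i < 0 := not_le.mp (Finset.mem_filter.mp hi).2
      have hge : μ iN ≤ μ i := hmem_ge i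
      have hble : -μ i ≤ b := by
        rw [hbdef]
        calc -μ i ≤ -μ iN := by linarith
          _ ≤ |μ iN| := neg_le_abs _
      nlinarith
    linarith
  have hPcard : P ≤ ((n : ℝ) - 1) * a := by
    have hc1 : P ≤ sp.card • a :=
      Finset.sum_le_card_nsmul sp μ a (fun i hi => hmem_le i (Finset.mem_of_mem_filter i hi))
    have hc2 : (sp.card : ℝ) ≤ (n : ℝ) - 1 := by
      have hc3 : sp.card ≤ n - 1 := by
        rw [← hcards]; exact Finset.card_filter_le s (fun i => 0 ≤ μ i)
      have hc4 : (sp.card : ℝ) ≤ ((n - 1 : ℕ) : ℝ) := Nat.cast_le.mpr hc3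
      have hc5 : ((n - 1 : ℕ) : ℝ) = (n : ℝ) - 1 := by
        push_cast [Nat.cast_sub (by omega : 1 ≤ n)]
        ring
      linarith [hc5 ▸ hc4]
    rw [nsmul_eq_mul] at hc1
    nlinarith
  have key : (n : ℝ) * d ≤ m ^ 2 + a * P + b * (P + m) := by
    rw [← hNPm]
    linarith [hstep, hsplit]
  have e2 : (d : ℝ) * d ≤ ((n : ℝ) / 2) * d := mul_le_mul_of_nonneg_right hd2 hd0
  have e3 : a * P ≤ a * (((n : ℝ) - 1) * a) := mul_le_mul_of_nonneg_left hPcard ha0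
  have e4 : ((n : ℝ) - 1) * a ^ 2 ≤ ((n : ℝ) - 1) * ((d : ℝ) / 4) :=
    mul_le_mul_of_nonneg_left ha2 (by linarith)
  have e6 : b * P ≤ b * (((n : ℝ) - 1) * a) := mul_le_mul_of_nonneg_left hPcard hb0
  have e8 : b * m ≤ b * d := mul_le_mul_of_nonneg_left hmd hb0
  have e9 : b * d ≤ b * n := mul_le_mul_of_nonneg_left (by linarith) hb0
  have hab : 0 ≤ a * b := mul_nonneg ha0 hb0
  have hfin : (n : ℝ) * ((d : ℝ) / 4) ≤ (n : ℝ) * ((1 + a) * b) := by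
    nlinarith [key, e2, e3, e4, e6, e8, e9, hab, hm0, hmd]
  have hfin2 := (mul_le_mul_iff_right₀ hn0).mp hfin
  linarith

/-- Let `G` be a `d`-regular simple graph on `n ≥ 2` vertices with
`1 ≤ d ≤ n/2`, and suppose the adjacency-matrix eigenvalues, listed in decreasing
order as `μ`, satisfy `0 ≤ λ₂ ≤ √d / 2` where `λ₂ = μ 1`. Then, with `λₙ = μ (n-1)`
the smallest eigenvalue, `(1 + λ₂) · |λₙ| ≥ d/4`. -/
theorem stmt_10 (n d : ℕ) (hn : 2 ≤ n)
    (G : SimpleGraph (Fin n)) [DecidableRel G.Adj]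
    (hreg : G.IsRegularOfDegree d)
    (hA : (G.adjMatrix ℝ).IsHermitian)
    (μ : Fin n → ℝ) (hμ : Antitone μ)
    (hperm : ∃ σ : Equiv.Perm (Fin n), μ = hA.eigenvalues ∘ σ)
    (hd1 : 1 ≤ d) (hd2 : (d : ℝ) ≤ (n : ℝ) / 2)
    (hmu2_nonneg : 0 ≤ μ ⟨1, by omega⟩)
    (hmu2_le : μ ⟨1, by omega⟩ ≤ Real.sqrt d / 2) :
    (1 + μ ⟨1, by omega⟩) * |μ ⟨n - 1, by omega⟩| ≥ (d : ℝ) / 4 := by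
  obtain ⟨σ, hσ⟩ := hperm
  have hsum : ∑ i, μ i = 0 := by
    have h1 : ∑ i, μ i = ∑ i, hA.eigenvalues i := by
      rw [hσ]; exact Equiv.sum_comp σ hA.eigenvalues
    rw [h1, ← trace_eq_sum_eig hA, SimpleGraph.trace_adjMatrix]
  have hsq : ∑ i, μ i ^ 2 = (n : ℝ) * d := by
    have h1 : ∑ i, μ i ^ 2 = ∑ i, hA.eigenvalues i ^ 2 := by
      rw [hσ]; exact Equiv.sum_comp σ (fun i => hA.eigenvalues i ^ 2)
    rw [h1, ← trace_sq_eq_sum_eig_sq hA]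
    have h2 : (G.adjMatrix ℝ * G.adjMatrix ℝ).trace
        = ∑ i : Fin n, ((G.adjMatrix ℝ * G.adjMatrix ℝ) i i) := rfl
    rw [h2]
    have h3 : ∀ i : Fin n, ((G.adjMatrix ℝ * G.adjMatrix ℝ) i i) = (d : ℝ) := by
      intro i
      rw [G.adjMatrix_mul_self_apply_self i, hreg i]
    rw [Finset.sum_congr rfl (fun i _ => h3 i)]
    simp [mul_comm]
  have habs : ∀ i, |μ i| ≤ (d : ℝ) := by
    intro i
    rw [hσ]
    exact eig_abs_le G hreg hA (σ i)
  exact stmt_10_aux n d hn μ hμ hsum hsq habs hd1 hd2 (by omega) (by omega) (by omega)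
    hmu2_nonneg hmu2_le
end
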